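/- Cauchy integral representation of Fourier tails: let Φ(z) = Σ_{m=1}^∞ c_m z^m be holomorphic on an open neighborhood of the closed unit disc, and let Υ(w,z) = (Φ(w) − Φ(z))/(w − z), extended by Υ(z,z) = Φ′(z). Then for every integer n ≥ 1 and every z with |z| < 1, Σ_{m=n}^∞ c_m z^m = (1/2πi) ∮_{|w|=1} (z/w)^n Υ(w,z) dw. -/

import Mathlib

open MeasureTheory Real Metric

/-- The `n`-th Fourier coefficient of a `2π`-periodic function `f : ℝ → ℝ`. -/
noncomputable def fourierC (f : ℝ → ℝ) (n : ℤ) : ℂ :=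
  (1 / (2 * π)) * ∫ θ in (0:ℝ)..(2 * π), (f θ : ℂ) * Complex.exp (-Complex.I * (n : ℂ) * (θ : ℂ))

/-- The Hilbert transform on the circle, sending `Σ cₙ e^{inθ}` to `Σ (−i sgn n) cₙ e^{inθ}`. -/
noncomputable def hilbertT (f : ℝ → ℝ) (θ : ℝ) : ℝ :=
  (∑' n : ℤ, -Complex.I * ((n.sign : ℤ) : ℂ) * fourierC f n *
    Complex.exp (Complex.I * (n : ℂ) * (θ : ℂ))).re

lemma myCircleIntegral_add {f g : ℂ → ℂ} (hf : CircleIntegrable f 0 1)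
    (hg : CircleIntegrable g 0 1) :
    (∮ w in C(0, 1), (f w + g w)) = (∮ w in C(0, 1), f w) + ∮ w in C(0, 1), g w := by
  simp only [circleIntegral, smul_add, intervalIntegral.integral_add hf.out hg.out]

lemma myCircleIntegral_finset_sum {ι : Type*} (s : Finset ι) (f : ι → ℂ → ℂ)
    (h : ∀ i ∈ s, CircleIntegrable (f i) 0 1) :
    (∮ w in C(0, 1), ∑ i ∈ s, f i w) = ∑ i ∈ s, ∮ w in C(0, 1), f i w := by
  simp only [circleIntegral, Finset.smul_sum]
  exact intervalIntegral.integral_finset_sum fun i hi => (h i hi).out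

lemma sphere_ne_zero {w : ℂ} (hw : w ∈ Metric.sphere (0:ℂ) 1) : w ≠ 0 := by
  intro h; simp [h] at hw

lemma sphere_ne {w z : ℂ} (hw : w ∈ Metric.sphere (0:ℂ) 1) (hz : ‖z‖ < 1) : w ≠ z := by
  intro h
  rw [mem_sphere_iff_norm, sub_zero, h] at hw
  exact absurd hw (ne_of_lt hz)

lemma int_w_inv : (∮ w in C(0, 1), w⁻¹) = 2 * π * Complex.I := by
  have := circleIntegral.integral_sub_inv_of_mem_ball (c := (0:ℂ)) (w := 0) (R := 1)
    (by simp)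
  simpa using this

lemma int_sub_inv {z : ℂ} (hz : ‖z‖ < 1) :
    (∮ w in C(0, 1), (w - z)⁻¹) = 2 * π * Complex.I :=
  circleIntegral.integral_sub_inv_of_mem_ball (by simpa using hz)

lemma int_pow_inv (k : ℕ) : (∮ w in C(0, 1), ((w ^ (k + 2))⁻¹ : ℂ)) = 0 := by
  have := circleIntegral.integral_sub_zpow_of_ne (n := -(k + 2 : ℤ))
    (by omega) (0 : ℂ) 0 1
  have h2 : ∀ w : ℂ, (w - 0) ^ (-(k + 2 : ℤ)) = (w ^ (k + 2))⁻¹ := by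
    intro w
    rw [sub_zero, zpow_neg]
    norm_cast
  simpa only [h2] using this

lemma contOn_inv_pow (k : ℕ) : ContinuousOn (fun w : ℂ => (w ^ k)⁻¹) (sphere 0 1) :=
  ((continuous_pow k).continuousOn).inv₀ fun w hw => pow_ne_zero _ (sphere_ne_zero hw)

lemma contOn_sub_inv {z : ℂ} (hz : ‖z‖ < 1) :
    ContinuousOn (fun w : ℂ => (w - z)⁻¹) (sphere 0 1) :=
  ((continuous_id.sub continuous_const).continuousOn).inv₀ fun w hw =>
    sub_ne_zero.mpr (sphere_ne hw hz)

lemma step_alg (a w z : ℂ) (ha : a ≠ 0) (hw : w ≠ 0) (hwz : w - z ≠ 0) (hz : z ≠ 0) :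
    (a * w)⁻¹ * (w - z)⁻¹ = z⁻¹ * (a⁻¹ * (w - z)⁻¹) - z⁻¹ * (a * w)⁻¹ := by
  field_simp
  ring

lemma J_zero (z : ℂ) (hz : ‖z‖ < 1) (hz0 : z ≠ 0) :
    ∀ j : ℕ, (∮ w in C(0, 1), ((w ^ (j + 1))⁻¹ * (w - z)⁻¹ : ℂ)) = 0 := by
  intro j
  induction j with
  | zero =>
    have heq : Set.EqOn (fun w : ℂ => (w ^ (0 + 1))⁻¹ * (w - z)⁻¹)
        (fun w : ℂ => z⁻¹ * (w - z)⁻¹ - z⁻¹ * w⁻¹) (sphere 0 1) := by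
      intro w hw
      have hw0 := sphere_ne_zero hw
      have hwz : w - z ≠ 0 := sub_ne_zero.mpr (sphere_ne hw hz)
      simp only [pow_one]
      field_simp
      ring
    rw [circleIntegral.integral_congr zero_le_one heq,
      circleIntegral.integral_sub (f := fun w => z⁻¹ * (w - z)⁻¹) (g := fun w => z⁻¹ * w⁻¹)
        (((continuousOn_const.mul (contOn_sub_inv hz))).circleIntegrable zero_le_one)
        (((continuousOn_const.mul ((contOn_inv_pow 1).congr (by intro w hw; simp)))).circleIntegrable
          zero_le_one),
      circleIntegral.integral_const_mul, circleIntegral.integral_const_mul,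
      int_sub_inv hz, int_w_inv]
    ring
  | succ j ih =>
    have heq : Set.EqOn (fun w : ℂ => (w ^ (j + 1 + 1))⁻¹ * (w - z)⁻¹)
        (fun w : ℂ => z⁻¹ * ((w ^ (j + 1))⁻¹ * (w - z)⁻¹) - z⁻¹ * (w ^ (j + 2))⁻¹)
        (sphere 0 1) := by
      intro w hw
      have hw0 : w ≠ 0 := sphere_ne_zero hw
      have hwz : w - z ≠ 0 := sub_ne_zero.mpr (sphere_ne hw hz)
      simp only [pow_succ]
      rw [show w ^ j * w = w ^ (j+1) by rw [pow_succ]]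
      exact step_alg _ _ _ (pow_ne_zero _ hw0) hw0 hwz hz0
    rw [circleIntegral.integral_congr zero_le_one heq,
      circleIntegral.integral_sub (f := fun w => z⁻¹ * ((w ^ (j + 1))⁻¹ * (w - z)⁻¹))
        (g := fun w => z⁻¹ * (w ^ (j + 2))⁻¹)
        ((continuousOn_const.mul ((contOn_inv_pow (j + 1)).mul (contOn_sub_inv hz))).circleIntegrable
          zero_le_one)
        ((continuousOn_const.mul (contOn_inv_pow (j + 2))).circleIntegrable zero_le_one),
      circleIntegral.integral_const_mul, circleIntegral.integral_const_mul, ih, int_pow_inv j]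
    ring

open Filter Topology in
lemma tail_differentiable (c : ℕ → ℂ) {r : ℝ} (hr : 1 < r)
    (hsum : ∀ z : ℂ, ‖z‖ < r → Summable fun m : ℕ => c m * z ^ m) (n : ℕ) :
    DifferentiableOn ℂ (fun w : ℂ => ∑' m : ℕ, c (n + m) * w ^ m) (closedBall (0:ℂ) 1) := by
  set ρ : ℝ := (1 + r) / 2 with hρdef
  have hρ1 : 1 < ρ := by rw [hρdef]; linarith
  have hρr : ρ < r := by rw [hρdef]; linarith
  have hρ0 : (0:ℝ) < ρ := by linarith
  set p : FormalMultilinearSeries ℂ ℂ ℂ :=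
    fun m => ContinuousMultilinearMap.mkPiRing ℂ (Fin m) (c (n + m)) with hpdef
  have hpnorm : ∀ m, ‖p m‖ = ‖c (n + m)‖ := fun m =>
    ContinuousMultilinearMap.norm_mkPiRing (𝕜 := ℂ) (ι := Fin m) (c (n + m))
  -- summability at ρ gives terms → 0
  have hsummρ : Summable fun m : ℕ => c m * (ρ : ℂ) ^ m := by
    refine hsum _ ?_
    rw [Complex.norm_real, Real.norm_eq_abs, abs_of_pos hρ0]
    exact hρr
  have h0 : Tendsto (fun m : ℕ => ‖c m‖ * ρ ^ m) atTop (𝓝 0) := by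
    have := hsummρ.tendsto_atTop_zero.norm
    simp only [norm_mul, norm_pow, Complex.norm_real, Real.norm_eq_abs,
      abs_of_pos hρ0, norm_zero] at this
    exact this
  have h1 : Tendsto (fun m : ℕ => ‖c (n + m)‖ * ρ ^ (n + m)) atTop (𝓝 0) := by
    have := h0.comp (tendsto_add_atTop_nat n)
    simpa [Function.comp_def, Nat.add_comm] using this
  have h2 : Tendsto (fun m : ℕ => ‖p m‖ * ρ ^ m) atTop (𝓝 0) := by
    have := h1.mul_const ((ρ ^ n)⁻¹)
    rw [zero_mul] at this
    refine this.congr fun m => ?_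
    rw [hpnorm, pow_add]
    field_simp
  set R : NNReal := ⟨ρ, hρ0.le⟩ with hRdef
  have hrad : (R : ENNReal) ≤ p.radius := p.le_radius_of_tendsto (l := 0) (by exact_mod_cast h2)
  have hrad1 : (1 : ENNReal) < p.radius := by
    refine lt_of_lt_of_le ?_ hrad
    rw [show ((1:ENNReal) = ((1:NNReal) : ENNReal)) from rfl]
    exact_mod_cast (by exact_mod_cast hρ1 : (1:NNReal) < R)
  have hps : HasFPowerSeriesOnBall p.sum p 0 p.radius :=
    p.hasFPowerSeriesOnBall (zero_lt_one.trans hrad1)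
  have hfun : (fun w : ℂ => ∑' m : ℕ, c (n + m) * w ^ m) = p.sum := by
    funext w
    rw [FormalMultilinearSeries.sum]
    refine tsum_congr fun m => ?_
    rw [hpdef]
    simp [ContinuousMultilinearMap.mkPiRing_apply, smul_eq_mul, mul_comm]
  rw [hfun]
  refine (hps.differentiableOn).mono fun x hx => ?_
  rw [EMetric.mem_ball, edist_zero_right]
  refine lt_of_le_of_lt ?_ hrad1
  rw [Metric.mem_closedBall, dist_zero_right] at hx
  rw [← ofReal_norm]; exact ENNReal.ofReal_le_one.mpr hx

/-- Cauchy integral representation of Fourier tails: for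
`Φ(z) = Σ_{m≥1} c_m z^m` holomorphic on a neighborhood of the closed unit disc
(i.e. with radius of convergence `> 1`), for every `n ≥ 1` and `|z| < 1`,
`Σ_{m≥n} c_m z^m = (1/2πi) ∮_{|w|=1} (z/w)^n Υ(w,z) dw`. -/
theorem cauchy_tail_representation (c : ℕ → ℂ) (hc0 : c 0 = 0)
    (hconv : ∃ r : ℝ, 1 < r ∧ ∀ z : ℂ, ‖z‖ < r → Summable fun m : ℕ => c m * z ^ m)
    (n : ℕ) (hn : 1 ≤ n) (z : ℂ) (hz : ‖z‖ < 1) :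
    (∑' m : ℕ, c (n + m) * z ^ (n + m))
      = (1 / (2 * (π : ℂ) * Complex.I)) *
        ∮ w in C(0, 1), (z / w) ^ n *
          (if w = z then deriv (fun ζ : ℂ => ∑' m : ℕ, c m * ζ ^ m) z
           else ((∑' m : ℕ, c m * w ^ m) - ∑' m : ℕ, c m * z ^ m) / (w - z)) := by
  obtain ⟨r, hr1, hsum⟩ := hconv
  by_cases hz0 : z = 0
  · subst hz0
    have hL : (∑' m : ℕ, c (n + m) * (0:ℂ) ^ (n + m)) = 0 := by
      rw [tsum_congr (fun m => by
        rw [zero_pow (by omega : n + m ≠ 0), mul_zero] :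
        ∀ m : ℕ, c (n + m) * (0:ℂ) ^ (n + m) = 0), tsum_zero]
    rw [hL]
    have h0n : (0:ℂ) ^ n = 0 := zero_pow (by omega : n ≠ 0)
    simp only [zero_div, h0n, zero_mul]
    simp [circleIntegral]
  -- main case : z ≠ 0
  set h : ℂ → ℂ := fun w => ∑' m : ℕ, c (n + m) * w ^ m with hhdef
  set P : ℂ → ℂ := fun w => ∑ m ∈ Finset.range n, c m * w ^ m with hPdef
  have hd : DifferentiableOn ℂ h (closedBall (0:ℂ) 1) := tail_differentiable c hr1 hsum n
  have hdF : DifferentiableOn ℂ (fun w => z ^ n * h w) (closedBall (0:ℂ) 1) :=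
    (differentiableOn_const _).mul hd
  have hcont : ContinuousOn h (sphere (0:ℂ) 1) :=
    hd.continuousOn.mono sphere_subset_closedBall
  have hsplit : ∀ w : ℂ, ‖w‖ < r → (∑' m : ℕ, c m * w ^ m) = P w + w ^ n * h w := by
    intro w hw
    have hs := hsum w hw
    rw [← Summable.sum_add_tsum_nat_add n hs, hPdef, hhdef]
    congr 1
    rw [← tsum_mul_left]
    exact tsum_congr fun m => by rw [add_comm m n, pow_add]; ring
  set e1 : ℂ → ℂ :=
    fun w => ∑ m ∈ Finset.range n, (z ^ n * c m) * ((w ^ (n - m))⁻¹ * (w - z)⁻¹) with he1def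
  set e2 : ℂ → ℂ :=
    fun w => (z ^ n * ∑' m : ℕ, c m * z ^ m) * ((w ^ n)⁻¹ * (w - z)⁻¹) with he2def
  -- pointwise identity on the unit circle
  have hEq : Set.EqOn
      (fun w : ℂ => (z / w) ^ n *
        (if w = z then deriv (fun ζ : ℂ => ∑' m : ℕ, c m * ζ ^ m) z
         else ((∑' m : ℕ, c m * w ^ m) - ∑' m : ℕ, c m * z ^ m) / (w - z)))
      (fun w : ℂ => (w - z)⁻¹ • (z ^ n * h w) + (e1 w - e2 w)) (sphere (0:ℂ) 1) := by
    intro w hw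
    have hw0 : w ≠ 0 := sphere_ne_zero hw
    have hwz : w ≠ z := sphere_ne hw hz
    have hwz' : w - z ≠ 0 := sub_ne_zero.mpr hwz
    have hwn : w ^ n ≠ 0 := pow_ne_zero _ hw0
    have hwr : ‖w‖ < r := by
      rw [mem_sphere_iff_norm, sub_zero] at hw
      rw [hw]; exact hr1
    simp only [if_neg hwz, smul_eq_mul]
    have he1w : e1 w = P w * (z ^ n * ((w ^ n)⁻¹ * (w - z)⁻¹)) := by
      rw [he1def]
      simp only
      rw [Finset.sum_congr rfl (fun m hm => by
        rw [Finset.mem_range] at hm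
        have hpow : w ^ m * w ^ (n - m) = w ^ n := by
          rw [← pow_add]; congr 1; omega
        have hinv : (w ^ (n - m))⁻¹ = w ^ m * (w ^ n)⁻¹ := by
          rw [← hpow, mul_inv, mul_inv_cancel_left₀ (pow_ne_zero _ hw0)]
        rw [hinv]; ring :
        ∀ m ∈ Finset.range n, (z ^ n * c m) * ((w ^ (n - m))⁻¹ * (w - z)⁻¹)
          = (c m * w ^ m) * (z ^ n * ((w ^ n)⁻¹ * (w - z)⁻¹))), ← Finset.sum_mul]
    rw [hsplit w hwr, he1w, he2def]
    simp only
    field_simp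
    have hwi : w ^ n * w⁻¹ ^ n = 1 := by rw [inv_pow, mul_inv_cancel₀ hwn]
    linear_combination (z ^ n * P w - z ^ n * ∑' (m : ℕ), c m * z ^ m + z ^ n * w ^ n * h w) * hwi
  rw [circleIntegral.integral_congr zero_le_one hEq]
  -- integrability of the pieces
  have hgi : CircleIntegrable (fun w : ℂ => (w - z)⁻¹ • (z ^ n * h w)) 0 1 :=
    (((contOn_sub_inv hz).smul (continuousOn_const.mul hcont))).circleIntegrable zero_le_one
  have he1i : CircleIntegrable e1 0 1 := by
    refine (continuousOn_finset_sum _ fun m hm => ?_).circleIntegrable zero_le_one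
    exact continuousOn_const.mul ((contOn_inv_pow (n - m)).mul (contOn_sub_inv hz))
  have he2i : CircleIntegrable e2 0 1 :=
    (continuousOn_const.mul ((contOn_inv_pow n).mul (contOn_sub_inv hz))).circleIntegrable
      zero_le_one
  have hei : CircleIntegrable (fun w => e1 w - e2 w) 0 1 := by
    have := he1i.add he2i.neg
    rw [show (fun w => e1 w - e2 w) = e1 + -e2 from by funext w; simp [sub_eq_add_neg]]
    exact this
  rw [myCircleIntegral_add hgi hei]
  have hkey : (∮ w in C(0, 1), (w - z)⁻¹ • (z ^ n * h w)) = (2 * π * Complex.I : ℂ) • (z ^ n * h z) :=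
    hdF.circleIntegral_sub_inv_smul (by simpa using hz)
  have he1z : (∮ w in C(0, 1), e1 w) = 0 := by
    rw [he1def]
    rw [myCircleIntegral_finset_sum _ (fun m w => z ^ n * c m * ((w ^ (n - m))⁻¹ * (w - z)⁻¹)) (fun m hm =>
      (continuousOn_const.mul ((contOn_inv_pow (n - m)).mul (contOn_sub_inv hz))).circleIntegrable
        zero_le_one)]
    refine Finset.sum_eq_zero fun m hm => ?_
    rw [Finset.mem_range] at hm
    rw [circleIntegral.integral_const_mul]
    have hnm : n - m = (n - m - 1) + 1 := by omega
    rw [hnm, J_zero z hz hz0 (n - m - 1), mul_zero]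
  have he2z : (∮ w in C(0, 1), e2 w) = 0 := by
    rw [he2def]
    simp only
    rw [circleIntegral.integral_const_mul]
    have hnn : n = (n - 1) + 1 := by omega
    rw [hnn, J_zero z hz hz0 (n - 1), mul_zero]
  rw [circleIntegral.integral_sub he1i he2i, he1z, he2z, sub_zero, add_zero, hkey]
  have hLHS : (∑' m : ℕ, c (n + m) * z ^ (n + m)) = z ^ n * h z := by
    rw [hhdef]
    simp only
    rw [← tsum_mul_left]
    exact tsum_congr fun m => by rw [pow_add]; ring
  rw [hLHS, smul_eq_mul]
  have hpi : (2 * (π:ℂ) * Complex.I) ≠ 0 := by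
    simp [Real.pi_ne_zero, Complex.I_ne_zero, Complex.ofReal_ne_zero]
  field_simp
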